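/- For every Δt₀ ∈ (0,1] there exists a constant C(Δt₀) ∈ (0,∞) such that for all 0 ≤ τ ≤ Δt ≤ Δt₀ and all z ∈ ℝ, |Ψ_{Δt}(z) − Ψ_{Δt}(Φ_τ(z))| ≤ C(Δt₀) Δt (1 + |z|⁵). -/

import Mathlib

noncomputable section

/-- The flow map `Φ_t(z) = z / √(z² + (1 - z²) e^{-2t})` of the ODE `ż = z - z³`. -/
def Phi (t z : ℝ) : ℝ := z / Real.sqrt (z ^ 2 + (1 - z ^ 2) * Real.exp (-2 * t))

/-- `Ψ_t(z) = (Φ_t(z) - z)/t` for `t > 0`, and `Ψ_0(z) = z - z³`. -/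
def Psi (t z : ℝ) : ℝ := if t = 0 then z - z ^ 3 else (Phi t z - z) / t

lemma D_pos {t z : ℝ} (ht : 0 ≤ t) : 0 < z ^ 2 + (1 - z ^ 2) * Real.exp (-2 * t) := by
  have h1 : Real.exp (-2 * t) ≤ 1 := Real.exp_le_one_iff.mpr (by nlinarith)
  nlinarith [Real.exp_pos (-2 * t), sq_nonneg z]

lemma Phi_zero (z : ℝ) : Phi 0 z = z := by
  simp [Phi]

lemma abs_Phi_le {t z : ℝ} (ht : 0 ≤ t) : |Phi t z| ≤ max 1 |z| := by
  have hD := D_pos (z := z) ht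
  have hE : Real.exp (-2 * t) ≤ 1 := Real.exp_le_one_iff.mpr (by nlinarith)
  have hE0 := Real.exp_pos (-2 * t)
  have hs : 0 < Real.sqrt (z ^ 2 + (1 - z ^ 2) * Real.exp (-2 * t)) := Real.sqrt_pos.mpr hD
  rw [Phi, abs_div, abs_of_pos hs, div_le_iff₀ hs]
  have hM0 : (0:ℝ) ≤ max 1 |z| := le_trans zero_le_one (le_max_left _ _)
  have key : z ^ 2 ≤ (max 1 |z| * Real.sqrt (z ^ 2 + (1 - z ^ 2) * Real.exp (-2 * t))) ^ 2 := by
    rw [mul_pow, Real.sq_sqrt hD.le]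
    rcases le_total (|z|) 1 with h | h
    · have : max 1 |z| = 1 := max_eq_left h
      rw [this]
      have hz2 : z ^ 2 ≤ 1 := by
        rw [← sq_abs]; calc |z| ^ 2 ≤ 1 ^ 2 := pow_le_pow_left₀ (abs_nonneg z) h 2
          _ = 1 := one_pow 2
      nlinarith
    · have : max 1 |z| = |z| := max_eq_right h
      rw [this]
      have hz2 : 1 ≤ z ^ 2 := by
        rw [← sq_abs]; calc (1:ℝ) = 1 ^ 2 := (one_pow 2).symm
          _ ≤ |z| ^ 2 := pow_le_pow_left₀ zero_le_one h 2
      nlinarith [sq_abs z, mul_nonneg (mul_nonneg (sq_nonneg z) (sub_nonneg.mpr hz2)) (sub_nonneg.mpr hE)]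
  calc |z| = Real.sqrt (z ^ 2) := (Real.sqrt_sq_eq_abs z).symm
    _ ≤ Real.sqrt ((max 1 |z| * Real.sqrt _) ^ 2) := Real.sqrt_le_sqrt key
    _ = max 1 |z| * Real.sqrt _ := Real.sqrt_sq (by positivity)

lemma Phi_hasDeriv {z t : ℝ} (ht : t ∈ Set.Ici (0:ℝ)) :
    HasDerivWithinAt (fun s => Phi s z) (Phi t z - (Phi t z) ^ 3) (Set.Ici 0) t := by
  have ht' : (0:ℝ) ≤ t := ht
  have hD : 0 < z ^ 2 + (1 - z ^ 2) * Real.exp (-2 * t) := D_pos ht'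
  set u : ℝ → ℝ := fun s => z ^ 2 + (1 - z ^ 2) * Real.exp (-2 * s) with hu_def
  have hus : 0 < Real.sqrt (u t) := Real.sqrt_pos.mpr hD
  have hu' : HasDerivWithinAt u ((1 - z ^ 2) * (Real.exp (-2 * t) * (-2))) (Set.Ici 0) t := by
    have h1 : HasDerivAt (fun s : ℝ => -2 * s) (-2) t := by
      simpa using (hasDerivAt_id t).const_mul (-2)
    have h2 : HasDerivAt (fun s : ℝ => Real.exp (-2 * s)) (Real.exp (-2 * t) * (-2)) t := h1.exp
    exact (((h2.const_mul (1 - z ^ 2)).const_add (z ^ 2)).hasDerivWithinAt).congr_deriv (by ring)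
  have hsq : HasDerivWithinAt (fun s => Real.sqrt (u s))
      (1 / (2 * Real.sqrt (u t)) * ((1 - z ^ 2) * (Real.exp (-2 * t) * (-2)))) (Set.Ici 0) t :=
    (Real.hasDerivAt_sqrt hD.ne').comp_hasDerivWithinAt t hu'
  have hinv : HasDerivWithinAt (fun s => z * (Real.sqrt (u s))⁻¹)
      (z * (-(1 / (2 * Real.sqrt (u t)) * ((1 - z ^ 2) * (Real.exp (-2 * t) * (-2)))) / (Real.sqrt (u t)) ^ 2))
      (Set.Ici 0) t := (hsq.inv hus.ne').const_mul z
  have heq : (fun s => z * (Real.sqrt (u s))⁻¹) = fun s => Phi s z := by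
    funext s; rw [Phi, div_eq_mul_inv]
  rw [heq] at hinv
  convert hinv using 1
  have h2 : Real.sqrt (u t) ^ 2 = u t := Real.sq_sqrt hD.le
  rw [Phi]
  show z / Real.sqrt (u t) - (z / Real.sqrt (u t)) ^ 3 = _
  set s0 := Real.sqrt (u t) with hs0
  have hs0' : s0 ≠ 0 := hus.ne'
  set E := Real.exp (-2 * t) with hE
  have h2' : s0 ^ 2 = z ^ 2 + (1 - z ^ 2) * E := h2
  field_simp
  linear_combination z * h2'

lemma Phi_semigroup {τ Δt : ℝ} (z : ℝ) (hτ : 0 ≤ τ) (hΔ : 0 ≤ Δt) :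
    Phi Δt (Phi τ z) = Phi (τ + Δt) z := by
  have hDτ : 0 < z ^ 2 + (1 - z ^ 2) * Real.exp (-2 * τ) := D_pos hτ
  have hDf : 0 < z ^ 2 + (1 - z ^ 2) * Real.exp (-2 * (τ + Δt)) := D_pos (by linarith)
  have hexp : Real.exp (-2 * (τ + Δt)) = Real.exp (-2 * τ) * Real.exp (-2 * Δt) := by
    rw [← Real.exp_add]; ring_nf
  have hsτ : 0 < Real.sqrt (z ^ 2 + (1 - z ^ 2) * Real.exp (-2 * τ)) := Real.sqrt_pos.mpr hDτ
  have ha2 : (Phi τ z) ^ 2 = z ^ 2 / (z ^ 2 + (1 - z ^ 2) * Real.exp (-2 * τ)) := by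
    rw [Phi, div_pow, Real.sq_sqrt hDτ.le]
  have key : (Phi τ z) ^ 2 + (1 - (Phi τ z) ^ 2) * Real.exp (-2 * Δt)
      = (z ^ 2 + (1 - z ^ 2) * Real.exp (-2 * (τ + Δt))) / (z ^ 2 + (1 - z ^ 2) * Real.exp (-2 * τ)) := by
    have h := hDτ.ne'
    rw [ha2, hexp]
    generalize Real.exp (-2 * τ) = Eτ at h ⊢
    generalize Real.exp (-2 * Δt) = EΔ
    field_simp
    ring
  rw [hexp] at hDf
  have hsf : 0 < Real.sqrt (z ^ 2 + (1 - z ^ 2) * (Real.exp (-2 * τ) * Real.exp (-2 * Δt))) :=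
    Real.sqrt_pos.mpr hDf
  rw [Phi, key, hexp, Real.sqrt_div (by linarith), Phi, Phi, hexp]
  rw [div_div_div_cancel_right₀]
  exact hsτ.ne'

/-- Lipschitz bound for the flow in time. -/
lemma Phi_time_lip {z : ℝ} {a b : ℝ} (ha : 0 ≤ a) (hab : a ≤ b) :
    |Phi b z - Phi a z| ≤ (max 1 |z| + (max 1 |z|) ^ 3) * (b - a) := by
  set M := max 1 |z| with hM
  have hM1 : (1:ℝ) ≤ M := le_max_left _ _
  have hbound : ∀ t ∈ Set.Ici (0:ℝ), ‖Phi t z - (Phi t z) ^ 3‖ ≤ M + M ^ 3 := by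
    intro t ht
    have h1 : |Phi t z| ≤ M := abs_Phi_le ht
    calc ‖Phi t z - (Phi t z) ^ 3‖ ≤ |Phi t z| + |(Phi t z) ^ 3| := norm_sub_le _ _
      _ = |Phi t z| + |Phi t z| ^ 3 := by rw [abs_pow]
      _ ≤ M + M ^ 3 := by
          have := pow_le_pow_left₀ (abs_nonneg (Phi t z)) h1 3
          linarith
  have := Convex.norm_image_sub_le_of_norm_hasDerivWithin_le
    (fun t ht => Phi_hasDeriv ht) hbound (convex_Ici 0) (Set.mem_Ici.mpr ha)
    (Set.mem_Ici.mpr (le_trans ha hab))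
  calc |Phi b z - Phi a z| ≤ (M + M ^ 3) * ‖b - a‖ := this
    _ = (M + M ^ 3) * (b - a) := by rw [Real.norm_eq_abs, abs_of_nonneg (by linarith)]

theorem psi_flow_increment_bound (Δt₀ : ℝ) (hΔt₀ : Δt₀ ∈ Set.Ioc (0 : ℝ) 1) :
    ∃ C : ℝ, 0 < C ∧ ∀ τ Δt : ℝ, 0 ≤ τ → τ ≤ Δt → Δt ≤ Δt₀ → ∀ z : ℝ,
      |Psi Δt z - Psi Δt (Phi τ z)| ≤ C * Δt * (1 + |z| ^ 5) := by
  refine ⟨8, by norm_num, ?_⟩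
  intro τ Δt hτ hτΔ hΔ z
  rcases eq_or_lt_of_le (le_trans hτ hτΔ) with hΔ0 | hΔ0
  · -- Δt = 0, hence τ = 0
    have hΔ0 : Δt = 0 := hΔ0.symm
    have hτ0 : τ = 0 := le_antisymm (hΔ0 ▸ hτΔ) hτ
    rw [hΔ0, hτ0, Phi_zero]
    simp
  · -- Δt > 0
    set M := max 1 |z| with hM
    have hM1 : (1:ℝ) ≤ M := le_max_left _ _
    have hMz : |z| ≤ M := le_max_right _ _
    have hΔτ0 : 0 ≤ Δt := hΔ0.le
    -- the difference function g s = Phi (s + Δt) z - Phi s z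
    set g : ℝ → ℝ := fun s => Phi (s + Δt) z - Phi s z with hg
    -- derivative of g and its bound
    have hg' : ∀ s ∈ Set.Ici (0:ℝ), HasDerivWithinAt g
        ((Phi (s + Δt) z - (Phi (s + Δt) z) ^ 3) - (Phi s z - (Phi s z) ^ 3)) (Set.Ici 0) s := by
      intro s hs
      have hs' : (0:ℝ) ≤ s := hs
      have hshift : HasDerivWithinAt (fun x : ℝ => x + Δt) 1 (Set.Ici 0) s :=
        ((hasDerivAt_id s).add_const Δt).hasDerivWithinAt
      have hmaps : Set.MapsTo (fun x : ℝ => x + Δt) (Set.Ici 0) (Set.Ici 0) := by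
        intro x hx; exact Set.mem_Ici.mpr (by simp at hx ⊢; linarith)
      have h1 : HasDerivWithinAt (fun s => Phi (s + Δt) z)
          ((Phi (s + Δt) z - (Phi (s + Δt) z) ^ 3) * 1) (Set.Ici 0) s :=
        (Phi_hasDeriv (Set.mem_Ici.mpr (by linarith))).comp s hshift hmaps
      have h2 := Phi_hasDeriv (z := z) (Set.mem_Ici.mpr hs')
      have h3 := h1.sub h2
      simp only [mul_one] at h3
      exact h3
    have hgbound : ∀ s ∈ Set.Ici (0:ℝ),
        ‖(Phi (s + Δt) z - (Phi (s + Δt) z) ^ 3) - (Phi s z - (Phi s z) ^ 3)‖ ≤ 8 * M ^ 5 * Δt := by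
      intro s hs
      have hs' : (0:ℝ) ≤ s := hs
      set a := Phi (s + Δt) z
      set b := Phi s z
      have haM : |a| ≤ M := abs_Phi_le (by linarith)
      have hbM : |b| ≤ M := abs_Phi_le hs'
      have hab : |a - b| ≤ (M + M ^ 3) * Δt := by
        have := Phi_time_lip (z := z) hs' (by linarith : s ≤ s + Δt)
        simpa using this
      have hfactor : (a - a ^ 3) - (b - b ^ 3) = (a - b) * (1 - a ^ 2 - a * b - b ^ 2) := by ring
      rw [Real.norm_eq_abs, hfactor, abs_mul]
      have hq : |1 - a ^ 2 - a * b - b ^ 2| ≤ 1 + 3 * M ^ 2 := by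
        have ha2 : a ^ 2 ≤ M ^ 2 := by rw [← sq_abs]; exact pow_le_pow_left₀ (abs_nonneg a) haM 2
        have hb2 : b ^ 2 ≤ M ^ 2 := by rw [← sq_abs]; exact pow_le_pow_left₀ (abs_nonneg b) hbM 2
        have hab2 : |a * b| ≤ M ^ 2 := by
          rw [abs_mul]
          calc |a| * |b| ≤ M * M := mul_le_mul haM hbM (abs_nonneg b) (by linarith)
            _ = M ^ 2 := (sq M).symm
        have h1 := abs_le.mp hab2
        rw [abs_le]
        constructor <;> nlinarith [sq_nonneg a, sq_nonneg b]
      calc |a - b| * |1 - a ^ 2 - a * b - b ^ 2| ≤ ((M + M ^ 3) * Δt) * (1 + 3 * M ^ 2) := by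
            apply mul_le_mul hab hq (abs_nonneg _)
            positivity
        _ ≤ 8 * M ^ 5 * Δt := by
            have h15 : M ≤ M ^ 5 := by
              calc M = M ^ 1 := (pow_one M).symm
                _ ≤ M ^ 5 := pow_le_pow_right₀ hM1 (by norm_num)
            have h35 : M ^ 3 ≤ M ^ 5 := pow_le_pow_right₀ hM1 (by norm_num)
            have hpoly : (M + M ^ 3) * (1 + 3 * M ^ 2) ≤ 8 * M ^ 5 := by nlinarith
            calc (M + M ^ 3) * Δt * (1 + 3 * M ^ 2) = ((M + M ^ 3) * (1 + 3 * M ^ 2)) * Δt := by ring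
              _ ≤ 8 * M ^ 5 * Δt := mul_le_mul_of_nonneg_right hpoly hΔ0.le
    -- MVT for g between 0 and τ
    have hgτ : |g τ - g 0| ≤ 8 * M ^ 5 * Δt * τ := by
      have := Convex.norm_image_sub_le_of_norm_hasDerivWithin_le hg' hgbound (convex_Ici 0)
        (Set.mem_Ici.mpr le_rfl) (Set.mem_Ici.mpr hτ)
      calc |g τ - g 0| ≤ 8 * M ^ 5 * Δt * ‖τ - 0‖ := this
        _ = 8 * M ^ 5 * Δt * τ := by rw [Real.norm_eq_abs, sub_zero, abs_of_nonneg hτ]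
    -- rewrite the Psi difference
    have hrw : Psi Δt z - Psi Δt (Phi τ z) = (g 0 - g τ) / Δt := by
      rw [Psi, Psi, if_neg hΔ0.ne', if_neg hΔ0.ne', Phi_semigroup z hτ hΔτ0, hg]
      simp only [zero_add, Phi_zero]
      ring
    rw [hrw, abs_div, abs_of_pos hΔ0, div_le_iff₀ hΔ0, abs_sub_comm]
    have hM5 : M ^ 5 ≤ 1 + |z| ^ 5 := by
      rcases le_total (|z|) 1 with h | h
      · have : M = 1 := max_eq_left h
        rw [this]
        have h0 : (0:ℝ) ≤ |z| ^ 5 := by positivity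
        simp only [one_pow]
        linarith
      · have : M = |z| := max_eq_right h
        rw [this]; linarith
    calc |g τ - g 0| ≤ 8 * M ^ 5 * Δt * τ := hgτ
      _ ≤ 8 * M ^ 5 * Δt * Δt := by
          apply mul_le_mul_of_nonneg_left hτΔ
          positivity
      _ ≤ 8 * (1 + |z| ^ 5) * Δt * Δt := by
          have h8 : 8 * M ^ 5 ≤ 8 * (1 + |z| ^ 5) := by linarith
          nlinarith [mul_le_mul_of_nonneg_right h8 (mul_nonneg hΔτ0 hΔτ0)]
      _ = 8 * Δt * (1 + |z| ^ 5) * Δt := by ring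

end
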